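/- arXiv:1403.8148 — 4 statements merged into one kernel-verified Lean document; each statement's English description precedes it below -/
import Mathlib

section
/- Let P be a prime ideal of k[x_1,...,x_n] and let M(P) be the associated algebraic matroid on the images of the variables in Frac(k[x]/P). A subset C ⊆ {x_1,...,x_n} is a circuit of M(P) if and only if the elimination ideal P ∩ k[C] is a nonzero principal ideal whose generator has support exactly C (i.e., every variable of C appears in the generator). -/
open MvPolynomial

set_option maxHeartbeats 1000000 in
set_option synthInstance.maxHeartbeats 1000000 in
/-- Split off the variable `i` from a multivariate polynomial ring. -/
noncomputable def AlgMatroid.eSplit (k : Type*) [CommSemiring k] {σ : Type*} [DecidableEq σ]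
    (i : σ) : MvPolynomial σ k ≃ₐ[k] Polynomial (MvPolynomial {j : σ // j ≠ i} k) :=
  (renameEquiv k (Equiv.optionSubtypeNe i)).symm.trans (optionEquivLeft k {j : σ // j ≠ i})

namespace AlgMatroid

set_option maxHeartbeats 1000000
set_option synthInstance.maxHeartbeats 1000000

variable {k : Type*} {σ : Type*} [DecidableEq σ]

theorem eSplit_rename [CommSemiring k] (i : σ) (q : MvPolynomial {j : σ // j ≠ i} k) :
    eSplit k i (rename (Subtype.val : {j : σ // j ≠ i} → σ) q) = Polynomial.C q := by
  have h : ((eSplit k i).toAlgHom.comp (rename (Subtype.val : {j : σ // j ≠ i} → σ)))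
      = (Polynomial.CAlgHom : MvPolynomial {j : σ // j ≠ i} k →ₐ[k] _) := by
    apply MvPolynomial.algHom_ext
    intro j
    simp only [AlgHom.comp_apply, rename_X, AlgEquiv.toAlgHom_eq_coe, AlgHom.coe_coe,
      eSplit, AlgEquiv.trans_apply, renameEquiv_symm, renameEquiv_apply,
      Equiv.optionSubtypeNe_symm_of_ne j.2, Polynomial.CAlgHom]
    show (optionEquivLeft k {j : σ // j ≠ i}) ((renameEquiv k (Equiv.optionSubtypeNe i).symm)
      (X (j : σ))) = Polynomial.C (X j)
    rw [renameEquiv_apply, rename_X, Equiv.optionSubtypeNe_symm_of_ne j.2, optionEquivLeft_X_some]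
  exact congrFun (congrArg (fun f => f.toFun) h) q

theorem natDegree_eSplit_eq_zero_iff [CommSemiring k] (i : σ) (p : MvPolynomial σ k) :
    (eSplit k i p).natDegree = 0 ↔ i ∉ p.vars := by
  constructor
  · intro h hi
    obtain ⟨x, hx⟩ := Polynomial.natDegree_eq_zero.mp h
    have hp : p = rename (Subtype.val : {j : σ // j ≠ i} → σ) x := by
      apply (eSplit k i).injective
      rw [eSplit_rename, hx]
    rw [hp] at hi
    obtain ⟨j, _, hj⟩ := Finset.mem_image.mp (vars_rename _ _ hi)
    exact j.2 hj
  · intro hi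
    have hsub : ↑p.vars ⊆ Set.range (Subtype.val : {j : σ // j ≠ i} → σ) := by
      intro j hj
      exact ⟨⟨j, fun h => hi (h ▸ hj)⟩, rfl⟩
    obtain ⟨q, hq⟩ := exists_rename_eq_of_vars_subset_range p
      (Subtype.val : {j : σ // j ≠ i} → σ) Subtype.val_injective hsub
    rw [← hq, eSplit_rename]
    exact Polynomial.natDegree_C q

variable [Field k]

theorem vars_subset_vars_mul (g θ : MvPolynomial σ k) (hg : g ≠ 0) (hθ : θ ≠ 0) :
    θ.vars ⊆ (g * θ).vars := by
  intro i hi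
  by_contra hmem
  have h0 : (eSplit k i (g * θ)).natDegree = 0 := (natDegree_eSplit_eq_zero_iff i _).mpr hmem
  rw [map_mul] at h0
  rw [Polynomial.natDegree_mul ((map_ne_zero_iff _ (eSplit k i).injective).mpr hg)
    ((map_ne_zero_iff _ (eSplit k i).injective).mpr hθ)] at h0
  exact (natDegree_eSplit_eq_zero_iff i θ).mp (Nat.eq_zero_of_add_eq_zero_left h0) hi

variable [Fintype σ]

theorem key_bwd (Q : Ideal (MvPolynomial σ k)) (θ : MvPolynomial σ k) (h0 : θ ≠ 0)
    (hspan : Q = Ideal.span {θ}) (hv : θ.vars = Finset.univ) :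
    Q ≠ ⊥ ∧ ∀ q ∈ Q, q ≠ 0 → q.vars = Finset.univ := by
  constructor
  · intro hbot
    have : θ ∈ Q := hspan ▸ Ideal.mem_span_singleton_self θ
    rw [hbot, Ideal.mem_bot] at this
    exact h0 this
  · intro q hq hq0
    obtain ⟨c, rfl⟩ := Ideal.mem_span_singleton.mp (hspan ▸ hq)
    have hc : c ≠ 0 := fun h => hq0 (by rw [h, mul_zero])
    refine Finset.Subset.antisymm (Finset.subset_univ _) ?_
    rw [← hv, mul_comm]
    exact vars_subset_vars_mul c θ hc h0

set_option linter.unnecessarySimpa false in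
theorem key_fwd (Q : Ideal (MvPolynomial σ k)) (hQp : Q.IsPrime) (hQ : Q ≠ ⊥)
    (hfull : ∀ q ∈ Q, q ≠ 0 → q.vars = Finset.univ) :
    ∃ θ : MvPolynomial σ k, θ ≠ 0 ∧ Q = Ideal.span {θ} ∧ θ.vars = Finset.univ := by
  obtain ⟨θ, hθQ, hθ⟩ := hQp.exists_mem_prime_of_ne_bot hQ
  have hθ0 : θ ≠ 0 := hθ.ne_zero
  have hvars : θ.vars = Finset.univ := hfull θ hθQ hθ0
  rcases isEmpty_or_nonempty σ with hσ | hσ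
  · exfalso
    have hpr : Prime ((isEmptyAlgEquiv k σ) θ) := (MulEquiv.prime_iff (isEmptyAlgEquiv k σ).toMulEquiv).mpr hθ
    rcases eq_or_ne ((isEmptyAlgEquiv k σ) θ) 0 with h | h
    · exact hpr.ne_zero h
    · exact hpr.not_unit (isUnit_iff_ne_zero.mpr h)
  obtain ⟨i⟩ := hσ
  have hiθ : i ∈ θ.vars := hvars ▸ Finset.mem_univ i
  refine ⟨θ, hθ0, le_antisymm ?_ (Ideal.span_le.mpr (by simpa using hθQ)), hvars⟩
  intro g hg
  rw [Ideal.mem_span_singleton]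
  by_contra hndvd
  have hg0 : g ≠ 0 := fun h => hndvd (h ▸ dvd_zero θ)
  set R := MvPolynomial {j : σ // j ≠ i} k with hR
  set e := eSplit k i with he
  set θ' := e θ with hθ'
  set g' := e g with hg'
  have hp' : Prime θ' := (MulEquiv.prime_iff e.toMulEquiv).mpr hθ
  have hθ'0 : θ' ≠ 0 := hp'.ne_zero
  have hg'0 : g' ≠ 0 := (map_ne_zero_iff _ e.injective).mpr hg0
  have hdeg : θ'.natDegree ≠ 0 := fun h => (natDegree_eSplit_eq_zero_iff i θ).mp h hiθ
  have hndvd' : ¬ θ' ∣ g' := by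
    rintro ⟨c, hc⟩
    exact hndvd ⟨e.symm c, by
      apply e.injective; rw [map_mul, AlgEquiv.apply_symm_apply]; exact hc⟩
  have hprim : θ'.IsPrimitive := by
    intro c hdvd
    obtain ⟨d, hd⟩ := hdvd
    rcases hp'.irreducible.isUnit_or_isUnit hd with h | h
    · exact Polynomial.isUnit_C.mp h
    · exfalso
      obtain ⟨u, hu, hCu⟩ := Polynomial.isUnit_iff.mp h
      apply hdeg
      rw [hd, ← hCu, ← Polynomial.C_mul]
      exact Polynomial.natDegree_C _
  letI : StrongNormalizationMonoid R := UniqueFactorizationMonoid.normalizationMonoid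
  letI : NormalizedGCDMonoid R := UniqueFactorizationMonoid.toNormalizedGCDMonoid R
  set F := FractionRing R with hF
  set φ := algebraMap R F with hφ
  set θF := θ'.map φ with hθF
  set gF := g'.map φ with hgF
  have hφinj : Function.Injective φ := IsFractionRing.injective R F
  have hirr : Irreducible θF := (hprim.irreducible_iff_irreducible_map_fraction_map).mp
    hp'.irreducible
  have hndF : ¬ θF ∣ gF := by
    intro hdvd
    apply hndvd'
    have hcontent : g'.content ≠ 0 := fun h => hg'0 (Polynomial.content_eq_zero_iff.mp h)
    have hCunit : IsUnit (Polynomial.C (φ g'.content)) :=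
      Polynomial.isUnit_C.mpr ((map_ne_zero_iff φ hφinj).mpr hcontent).isUnit
    have hdvd2 : θF ∣ (g'.primPart).map φ := by
      have : gF = Polynomial.C (φ g'.content) * (g'.primPart).map φ := by
        rw [hgF]
        conv_lhs => rw [g'.eq_C_content_mul_primPart]
        rw [Polynomial.map_mul, Polynomial.map_C]
      exact (hCunit.dvd_mul_left).mp (this ▸ hdvd)
    exact (hprim.dvd_of_fraction_map_dvd_fraction_map hdvd2).trans
      g'.primPart_dvd
  obtain ⟨u, v, huv⟩ := hirr.coprime_iff_not_dvd.mpr hndF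
  obtain ⟨bu, hbu⟩ := IsLocalization.integerNormalization_map_to_map (nonZeroDivisors R) u
  obtain ⟨bv, hbv⟩ := IsLocalization.integerNormalization_map_to_map (nonZeroDivisors R) v
  rw [← hφ] at hbu hbv
  set U := IsLocalization.integerNormalization (nonZeroDivisors R) u with hU
  set V := IsLocalization.integerNormalization (nonZeroDivisors R) v with hV
  have hsmul : ∀ (b : R) (p : Polynomial F), b • p = Polynomial.C (φ b) * p := by
    intro b p
    rw [Algebra.smul_def, Polynomial.algebraMap_apply]
  have hkey : (Polynomial.C (bv : R) * U) * θ' + (Polynomial.C (bu : R) * V) * g'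
      = Polynomial.C ((bu : R) * (bv : R)) := by
    apply Polynomial.map_injective φ hφinj
    simp only [Polynomial.map_add, Polynomial.map_mul, Polynomial.map_C]
    rw [hbu, hbv, hsmul, hsmul, map_mul, Polynomial.C_mul, ← hθF, ← hgF]
    calc Polynomial.C (φ (bv : R)) * (Polynomial.C (φ (bu : R)) * u) * θF
        + Polynomial.C (φ (bu : R)) * (Polynomial.C (φ (bv : R)) * v) * gF
        = Polynomial.C (φ (bu : R)) * Polynomial.C (φ (bv : R)) * (u * θF + v * gF) := by ring
      _ = Polynomial.C (φ (bu : R)) * Polynomial.C (φ (bv : R)) := by rw [huv, mul_one]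
  set d := e.symm ((Polynomial.C (bv : R) * U) * θ' + (Polynomial.C (bu : R) * V) * g') with hd
  have hdQ : d ∈ Q := by
    have : d = e.symm (Polynomial.C (bv : R) * U) * θ + e.symm (Polynomial.C (bu : R) * V) * g := by
      rw [hd, map_add, map_mul, map_mul]
      simp [hθ', hg']
    rw [this]
    exact Q.add_mem (Q.mul_mem_left _ hθQ) (Q.mul_mem_left _ hg)
  have hd0 : d ≠ 0 := by
    rw [hd, hkey]
    intro h
    have : Polynomial.C ((bu : R) * (bv : R)) = 0 := by
      have := congrArg e h
      simpa using this
    rw [Polynomial.C_eq_zero] at this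
    exact nonZeroDivisors.ne_zero (mul_mem bu.2 bv.2) this
  have hdi : i ∉ d.vars := by
    apply (natDegree_eSplit_eq_zero_iff i d).mp
    have : eSplit k i d = Polynomial.C ((bu : R) * (bv : R)) := by
      rw [← he, hd, hkey]; simp
    rw [this]
    exact Polynomial.natDegree_C _
  exact hdi (hfull d hdQ hd0 ▸ Finset.mem_univ i)

end AlgMatroid

set_option maxHeartbeats 2000000 in
set_option synthInstance.maxHeartbeats 1000000 in
/-- A subset `C` of the variables is a circuit of the algebraic matroid `M(P)` of a prime ideal
`P ⊆ k[x_1,...,x_n]` (a minimal set whose images in `Frac(k[x]/P)` are algebraically dependent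
over `k`) if and only if the elimination ideal `P ∩ k[C]` is a nonzero principal ideal whose
generator has support exactly `C` (every variable of `C` appears in it). -/
theorem circuit_iff_principal_full_support {k : Type*} [Field k] {n : ℕ}
    (P : Ideal (MvPolynomial (Fin n) k)) [P.IsPrime] (C : Finset (Fin n))
    (a : Fin n → FractionRing (MvPolynomial (Fin n) k ⧸ P))
    (ha : ∀ i, a i = algebraMap (MvPolynomial (Fin n) k ⧸ P) _ (Ideal.Quotient.mk P (X i))) :
    ((¬ AlgebraicIndependent k (fun i : C => a i.1)) ∧
      ∀ T : Finset (Fin n), T ⊂ C → AlgebraicIndependent k (fun i : T => a i.1))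
    ↔ (∃ θ : MvPolynomial C k, θ ≠ 0 ∧
        P.comap (rename (Subtype.val : C → Fin n)).toRingHom = Ideal.span {θ} ∧
        θ.vars = Finset.univ) := by
  -- `aeval a` vanishes exactly on `P`
  have hker : ∀ p : MvPolynomial (Fin n) k, aeval a p = 0 ↔ p ∈ P := by
    have hψ : (aeval a : MvPolynomial (Fin n) k →ₐ[k] _) =
        ((IsScalarTower.toAlgHom k (MvPolynomial (Fin n) k ⧸ P) _).comp
          (Ideal.Quotient.mkₐ k P)) := by
      apply MvPolynomial.algHom_ext
      intro i
      simp [ha i]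
    intro p
    rw [hψ]
    simp only [AlgHom.comp_apply, IsScalarTower.coe_toAlgHom', Ideal.Quotient.mkₐ_eq_mk]
    rw [map_eq_zero_iff _ (IsFractionRing.injective (MvPolynomial (Fin n) k ⧸ P)
      (FractionRing (MvPolynomial (Fin n) k ⧸ P)))]
    exact Ideal.Quotient.eq_zero_iff_mem
  -- algebraic independence of a subset ↔ triviality of the elimination ideal
  have keyS : ∀ S : Finset (Fin n),
      AlgebraicIndependent k (fun i : S => a i.1) ↔
        P.comap (rename (Subtype.val : S → Fin n)).toRingHom = ⊥ := by
    intro S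
    rw [algebraicIndependent_iff]
    constructor
    · intro h
      apply (Submodule.eq_bot_iff _).mpr
      intro p hp
      apply h
      have h2 : aeval (a ∘ (Subtype.val : S → Fin n)) p = 0 := by
        rw [← aeval_rename]
        exact (hker _).mpr hp
      exact h2
    · intro h p hp
      have h1 : rename (Subtype.val : S → Fin n) p ∈ P := by
        apply (hker _).mp
        rw [aeval_rename]
        exact hp
      have h2 : p ∈ P.comap (rename (Subtype.val : S → Fin n)).toRingHom := h1
      rw [h] at h2
      simpa using h2
  set Q := P.comap (rename (Subtype.val : C → Fin n)).toRingHom with hQdef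
  haveI hQp : Q.IsPrime := Ideal.IsPrime.comap _
  -- compatibility of renames for subsets
  have hren : ∀ (T : Finset (Fin n)) (hT : T ⊆ C) (p : MvPolynomial T k),
      rename (Subtype.val : C → Fin n)
          (rename (fun j : T => (⟨j.1, hT j.2⟩ : C)) p)
        = rename (Subtype.val : T → Fin n) p := by
    intro T hT p
    rw [rename_rename]
    rfl
  constructor
  · rintro ⟨hdep, hmin⟩
    have hQne : Q ≠ ⊥ := fun h => hdep ((keyS C).mpr h)
    have hfull : ∀ q ∈ Q, q ≠ 0 → q.vars = Finset.univ := by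
      intro q hq hq0
      rw [Finset.eq_univ_iff_forall]
      intro i0
      by_contra hi0
      set T : Finset (Fin n) := q.vars.image Subtype.val with hT
      have hTsub : T ⊆ C := by
        intro x hx
        obtain ⟨j, _, rfl⟩ := Finset.mem_image.mp hx
        exact j.2
      have hi0T : (i0 : Fin n) ∉ T := by
        intro hmem
        obtain ⟨j, hj, hval⟩ := Finset.mem_image.mp hmem
        exact hi0 (by rwa [show j = i0 from Subtype.ext hval] at hj)
      have hTC : T ⊂ C := Finset.ssubset_iff_of_subset hTsub |>.mpr ⟨i0.1, i0.2, hi0T⟩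
      have hbot := (keyS T).mp (hmin T hTC)
      have hsub2 : ↑q.vars ⊆ Set.range (fun j : T => (⟨j.1, hTsub j.2⟩ : C)) := by
        intro j hj
        exact ⟨⟨j.1, Finset.mem_image_of_mem _ (Finset.mem_coe.mp hj)⟩, Subtype.ext rfl⟩
      have hinj : Function.Injective (fun j : T => (⟨j.1, hTsub j.2⟩ : C)) :=
        fun x y h => Subtype.ext (congrArg (fun z : {c // c ∈ C} => z.1) h)
      obtain ⟨x, hx⟩ := exists_rename_eq_of_vars_subset_range q _ hinj hsub2
      have hxmem : x ∈ P.comap (rename (Subtype.val : T → Fin n)).toRingHom := by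
        show rename (Subtype.val : T → Fin n) x ∈ P
        rw [← hren T hTsub x, hx]
        exact hq
      rw [hbot] at hxmem
      exact hq0 (by rw [← hx, Ideal.mem_bot.mp hxmem, map_zero])
    exact AlgMatroid.key_fwd Q hQp hQne hfull
  · rintro ⟨θ, h0, hspan, hv⟩
    obtain ⟨hQne, hfull⟩ := AlgMatroid.key_bwd Q θ h0 hspan hv
    constructor
    · intro hind
      exact hQne ((keyS C).mp hind)
    · intro T hTC
      apply (keyS T).mpr
      apply (Submodule.eq_bot_iff _).mpr
      intro x hx
      by_contra hx0
      have hinj : Function.Injective (fun j : T => (⟨j.1, hTC.subset j.2⟩ : C)) :=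
        fun x y h => Subtype.ext (congrArg (fun z : {c // c ∈ C} => z.1) h)
      have hmem : rename (fun j : T => (⟨j.1, hTC.subset j.2⟩ : C)) x ∈ Q := by
        show rename (Subtype.val : C → Fin n) _ ∈ P
        rw [hren T hTC.subset x]
        exact hx
      have hne : rename (fun j : T => (⟨j.1, hTC.subset j.2⟩ : C)) x ≠ 0 := by
        intro h
        exact hx0 (rename_injective _ hinj (by rw [h, map_zero]))
      have hvars := hfull _ hmem hne
      obtain ⟨i, hiC, hiT⟩ := Finset.exists_of_ssubset hTC
      have hmem2 : (⟨i, hiC⟩ : C) ∈ (rename (fun j : T => (⟨j.1, hTC.subset j.2⟩ : C)) x).vars :=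
        hvars ▸ Finset.mem_univ _
      obtain ⟨j, _, hj⟩ := Finset.mem_image.mp (vars_rename _ _ hmem2)
      have : (j : Fin n) = i := congrArg Subtype.val hj
      exact hiT (this ▸ j.2)
end

section
/- Let P be a prime ideal of k[x_1,...,x_n] and C a circuit of the algebraic matroid M(P). Then the generator θ_C of the principal ideal P ∩ k[C] is unique up to multiplication by a nonzero element of k, and θ_C is irreducible. -/
open MvPolynomial

theorem aux_mv_unit_fin {k : Type*} [Field k] :
    ∀ (m : ℕ) (p : MvPolynomial (Fin m) k), IsUnit p → ∃ c : k, c ≠ 0 ∧ p = C c := by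
  intro m
  induction m with
  | zero =>
    intro p hp
    refine ⟨p.coeff 0, ?_, eq_C_of_isEmpty p⟩
    intro h0
    rw [eq_C_of_isEmpty p, h0, map_zero] at hp
    exact hp.ne_zero rfl
  | succ m ih =>
    intro p hp
    have h1 : IsUnit (finSuccEquiv k m p) := hp.map (finSuccEquiv k m)
    obtain ⟨r, hr, hrq⟩ := Polynomial.isUnit_iff.mp h1
    obtain ⟨c, hc0, rfl⟩ := ih r hr
    refine ⟨c, hc0, (finSuccEquiv k m).injective ?_⟩
    rw [← hrq]
    simp [finSuccEquiv_apply]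

theorem aux_mv_unit {σ : Type*} [Fintype σ] {k : Type*} [Field k] {p : MvPolynomial σ k}
    (hp : IsUnit p) : ∃ c : k, c ≠ 0 ∧ p = C c := by
  obtain ⟨c, hc, h⟩ := aux_mv_unit_fin (Fintype.card σ)
    (rename (Fintype.equivFin σ) p) (hp.map (rename (Fintype.equivFin σ)))
  refine ⟨c, hc, rename_injective _ (Fintype.equivFin σ).injective ?_⟩
  rw [h, rename_C]

set_option maxHeartbeats 1000000 in
set_option synthInstance.maxHeartbeats 200000 in
/-- For a circuit `C` of the algebraic matroid `M(P)` of a prime ideal `P`, the generator `θ_C`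
of the principal elimination ideal `P ∩ k[C]` is unique up to multiplication by a nonzero scalar
of `k`, and any generator is irreducible. -/
theorem circuit_polynomial_unique_irreducible {k : Type*} [Field k] {n : ℕ}
    (P : Ideal (MvPolynomial (Fin n) k)) [P.IsPrime] (C : Finset (Fin n))
    (a : Fin n → FractionRing (MvPolynomial (Fin n) k ⧸ P))
    (ha : ∀ i, a i = algebraMap (MvPolynomial (Fin n) k ⧸ P) _ (Ideal.Quotient.mk P (X i)))
    (hdep : ¬ AlgebraicIndependent k (fun i : C => a i.1))
    (hmin : ∀ T : Finset (Fin n), T ⊂ C → AlgebraicIndependent k (fun i : T => a i.1)) :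
    (∀ θ θ' : MvPolynomial C k,
        P.comap (rename (Subtype.val : C → Fin n)).toRingHom = Ideal.span {θ} →
        P.comap (rename (Subtype.val : C → Fin n)).toRingHom = Ideal.span {θ'} →
        ∃ c : k, c ≠ 0 ∧ θ' = c • θ) ∧
    (∀ θ : MvPolynomial C k,
        P.comap (rename (Subtype.val : C → Fin n)).toRingHom = Ideal.span {θ} →
        Irreducible θ) := by
  set Q : Ideal (MvPolynomial C k) :=
    P.comap (rename (Subtype.val : C → Fin n)).toRingHom with hQdef
  -- the evaluation map agrees with the composite map
  have key : (aeval (fun i : C => a i.1) : MvPolynomial C k →ₐ[k] FractionRing (MvPolynomial (Fin n) k ⧸ P)) =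
      ((IsScalarTower.toAlgHom k (MvPolynomial (Fin n) k ⧸ P) (FractionRing (MvPolynomial (Fin n) k ⧸ P))).comp
        ((Ideal.Quotient.mkₐ k P).comp (rename (Subtype.val : C → Fin n)))) := by
    apply MvPolynomial.algHom_ext
    intro i
    simp [ha i.1]
  have hQprime : Q.IsPrime := Ideal.IsPrime.comap _
  have hQbot : Q ≠ ⊥ := by
    intro hbot
    apply hdep
    rw [AlgebraicIndependent]
    rw [show ⇑(aeval (fun i : C => a i.1) : MvPolynomial C k →ₐ[k] FractionRing (MvPolynomial (Fin n) k ⧸ P)) = _ from congrArg _ key]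
    intro p q hpq
    simp only [AlgHom.coe_comp, Function.comp_apply, IsScalarTower.coe_toAlgHom',
      Ideal.Quotient.mkₐ_eq_mk] at hpq
    have h2 := IsFractionRing.injective (MvPolynomial (Fin n) k ⧸ P) (FractionRing (MvPolynomial (Fin n) k ⧸ P)) hpq
    have h3 : p - q ∈ Q := by
      rw [hQdef, Ideal.mem_comap]
      rw [← Ideal.Quotient.eq_zero_iff_mem]
      simp only [AlgHom.toRingHom_eq_coe, RingHom.coe_coe, map_sub]
      rw [h2, sub_self]
    rw [hbot, Ideal.mem_bot, sub_eq_zero] at h3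
    exact h3
  have hirr : ∀ θ : MvPolynomial C k, Q = Ideal.span {θ} → Irreducible θ := by
    intro θ hθ
    have hθ0 : θ ≠ 0 := by
      rintro rfl
      rw [Set.singleton_zero, Ideal.span_zero] at hθ
      exact hQbot hθ
    have hpr : Prime θ := by
      rw [← Ideal.span_singleton_prime hθ0, ← hθ]
      exact hQprime
    exact hpr.irreducible
  constructor
  · intro θ θ' hθ hθ'
    have hθ0 : θ ≠ 0 := by
      rintro rfl
      rw [Set.singleton_zero, Ideal.span_zero] at hθ
      exact hQbot hθ
    have hass : Associated θ θ' :=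
      Ideal.span_singleton_eq_span_singleton.mp (hθ ▸ hθ')
    obtain ⟨u, hu⟩ := hass
    obtain ⟨c, hc0, hcu⟩ := aux_mv_unit (u.isUnit)
    refine ⟨c, hc0, ?_⟩
    rw [← hu, hcu, smul_eq_C_mul, mul_comm]
  · exact hirr
end

section
/- Let V = V(P) ⊆ k^n be an irreducible variety of dimension d over an algebraically closed field k of characteristic zero, with P generated by f_1,...,f_m, such that the Jacobian J(P) over the function field represents the dual of M(P). Then the non-matroidal locus NM(P) — points p ∈ V where the specialized Jacobian J(P)(p) fails to represent the dual of M(P) — is cut out on V by the ideal ∩_{B a base of M(P)} I_{n−d}(J(P){E\B}), where I_{n−d}(J{S}) is the ideal of (n−d)×(n−d) minors of the columns of J indexed by S. In particular, NM(P) is a proper closed subvariety of V. -/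
open MvPolynomial

section Aux
open Submodule Module Matrix

private lemma aux_exists_indep {K V : Type*} [Field K] [AddCommGroup V] [Module K V]
    {ι : Type*} [Fintype ι] (v : ι → V) (t : ℕ)
    (h : t ≤ finrank K (span K (Set.range v))) :
    ∃ g : Fin t → ι, Function.Injective g ∧ LinearIndependent K (v ∘ g) := by
  classical
  obtain ⟨b, hbsub, hbspan, hbind⟩ := exists_linearIndependent K (Set.range v)
  have hbfin : b.Finite := (Set.finite_range v).subset hbsub
  have hcard : t ≤ hbfin.toFinset.card := by
    have h1 : LinearIndependent K ((↑) : ↥((hbfin.toFinset : Finset V) : Set V) → V) := by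
      convert hbind using 2 <;> simp [hbfin.coe_toFinset]
    have h2 := finrank_span_finset_eq_card h1
    rw [hbfin.coe_toFinset, hbspan] at h2
    omega
  obtain ⟨u, hub, hucard⟩ := Finset.exists_subset_card_eq hcard
  have hu_sub : (u : Set V) ⊆ b := fun x hx => hbfin.mem_toFinset.mp (hub hx)
  have huind : LinearIndependent K (fun x : (u : Set V) => (x : V)) := (show LinearIndepOn K id b from hbind).mono hu_sub
  let e : Fin t ≃ ↥(u : Set V) := (finCongr hucard.symm).trans u.equivFin.symm
  have hmem : ∀ x : ↥(u : Set V), (x : V) ∈ Set.range v := fun x => hbsub (hu_sub x.2)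
  let pre : ↥(u : Set V) → ι := fun x => (hmem x).choose
  have hpre : ∀ x, v (pre x) = (x : V) := fun x => (hmem x).choose_spec
  refine ⟨pre ∘ e, ?_, ?_⟩
  · have hpi : Function.Injective pre := fun x y hxy => by
      apply Subtype.ext; rw [← hpre x, ← hpre y, hxy]
    exact hpi.comp e.injective
  · have heq : v ∘ (pre ∘ e) = (fun x : ↥(u : Set V) => (x : V)) ∘ e := by
      funext i; exact hpre (e i)
    rw [heq]
    exact huind.comp e e.injective

private lemma aux_rank_row_le {K : Type*} [Field K] {ι₁ ι₂ ι₃ : Type*} [Fintype ι₁] [Fintype ι₂]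
    [Fintype ι₃] (A : Matrix ι₁ ι₂ K) (r : ι₃ → ι₁) :
    (A.submatrix r id).rank ≤ A.rank := by
  have h : (A.submatrix r id).mulVecLin = (LinearMap.funLeft K K r).comp A.mulVecLin := by
    apply LinearMap.ext; intro x; funext i
    simp [Matrix.mulVecLin_apply, Matrix.mulVec, Matrix.submatrix, dotProduct,
      LinearMap.funLeft]
  rw [Matrix.rank, Matrix.rank, h, LinearMap.range_comp]
  exact Submodule.finrank_map_le _ _

private lemma aux_rank_submatrix_le {K : Type*} [Field K] {ι₁ ι₂ ι₃ ι₄ : Type*} [Fintype ι₁]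
    [Fintype ι₂] [Fintype ι₃] [Fintype ι₄] (A : Matrix ι₁ ι₂ K) (r : ι₃ → ι₁) (c : ι₄ → ι₂) :
    (A.submatrix r c).rank ≤ A.rank :=
  calc (A.submatrix r c).rank = (((Aᵀ.submatrix c id)ᵀ).submatrix r id).rank := rfl
    _ ≤ ((Aᵀ.submatrix c id)ᵀ).rank := aux_rank_row_le _ r
    _ = (Aᵀ.submatrix c id).rank := Matrix.rank_transpose _
    _ ≤ Aᵀ.rank := aux_rank_row_le _ c
    _ = A.rank := Matrix.rank_transpose _

private lemma aux_rank_ge_iff {K ι₁ ι₂ : Type*} [Field K] [Fintype ι₁] [Fintype ι₂]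
    (A : Matrix ι₁ ι₂ K) (t : ℕ) :
    t ≤ A.rank ↔ ∃ (r : Fin t → ι₁) (c : Fin t → ι₂), Function.Injective r ∧
      Function.Injective c ∧ (A.submatrix r c).det ≠ 0 := by
  classical
  constructor
  · intro h
    rw [Matrix.rank_eq_finrank_span_cols] at h
    obtain ⟨c, hcinj, hcind⟩ := aux_exists_indep Aᵀ t h
    set N : Matrix ι₁ (Fin t) K := A.submatrix id c with hN
    have hNT : Nᵀ = Aᵀ ∘ c := rfl
    have hrankN : N.rank = t := by
      rw [Matrix.rank_eq_finrank_span_cols, show N.col = Aᵀ ∘ c from rfl, finrank_span_eq_card hcind, Fintype.card_fin]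
    have hrows : t ≤ finrank K (span K (Set.range (fun i : ι₁ => N i))) := by
      have h1 : Nᵀ.rank = t := by rw [Matrix.rank_transpose, hrankN]
      have h2 := Matrix.rank_eq_finrank_span_cols Nᵀ
      rw [h1] at h2
      exact le_of_eq h2
    obtain ⟨r, hrinj, hrind⟩ := aux_exists_indep (fun i : ι₁ => N i) t hrows
    refine ⟨r, c, hrinj, hcinj, ?_⟩
    have hunit : IsUnit (A.submatrix r c) := by
      rw [← Matrix.linearIndependent_rows_iff_isUnit]
      exact hrind
    exact isUnit_iff_ne_zero.mp ((Matrix.isUnit_iff_isUnit_det _).mp hunit)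
  · rintro ⟨r, c, hrinj, hcinj, hdet⟩
    have hunit : IsUnit (A.submatrix r c) := by
      rw [Matrix.isUnit_iff_isUnit_det]
      exact isUnit_iff_ne_zero.mpr hdet
    have h := Matrix.rank_of_isUnit _ hunit
    rw [Fintype.card_fin] at h
    rw [← h]
    exact aux_rank_submatrix_le A r c

private lemma aux_ideal_vanish_iff {k : Type*} [Field k] {n m : ℕ}
    (f : Fin m → MvPolynomial (Fin n) k)
    {K : Type*} [Field K] (φ : MvPolynomial (Fin n) k →+* K) (B : Finset (Fin n)) (t : ℕ) :
    (∀ q ∈ Ideal.span {q : MvPolynomial (Fin n) k |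
        ∃ (r : Fin t → Fin m) (c : Fin t → Fin n),
          Function.Injective r ∧ Function.Injective c ∧ (∀ l, c l ∈ (Bᶜ : Finset (Fin n))) ∧
          q = (Matrix.of fun α β => pderiv (c β) (f (r α))).det}, φ q = 0) ↔
      (Matrix.of fun (i : Fin m) (j : (Bᶜ : Finset (Fin n))) =>
        φ (pderiv (j : Fin n) (f i))).rank < t := by
  classical
  set S : Set (MvPolynomial (Fin n) k) := {q : MvPolynomial (Fin n) k |
        ∃ (r : Fin t → Fin m) (c : Fin t → Fin n),
          Function.Injective r ∧ Function.Injective c ∧ (∀ l, c l ∈ (Bᶜ : Finset (Fin n))) ∧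
          q = (Matrix.of fun α β => pderiv (c β) (f (r α))).det} with hS
  set M : Matrix (Fin m) ((Bᶜ : Finset (Fin n)) : Type) K :=
    Matrix.of fun (i : Fin m) (j : (Bᶜ : Finset (Fin n))) =>
      φ (pderiv (j : Fin n) (f i)) with hM
  have h1 : (∀ q ∈ Ideal.span S, φ q = 0) ↔ ∀ q ∈ S, φ q = 0 := by
    constructor
    · exact fun h q hq => h q (Ideal.subset_span hq)
    · intro h q hq
      have hle : Ideal.span S ≤ RingHom.ker φ :=
        Ideal.span_le.mpr fun x hx => RingHom.mem_ker.mpr (h x hx)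
      exact RingHom.mem_ker.mp (hle hq)
  rw [h1, ← not_le, aux_rank_ge_iff M t]
  push_neg
  constructor
  · rintro h r c hrinj hcinj
    by_contra hdet
    have hc' : ∀ l, ((c l : Fin n)) ∈ (Bᶜ : Finset (Fin n)) := fun l => (c l).2
    have hcval : Function.Injective (fun l => ((c l : Fin n))) :=
      fun x y hxy => hcinj (Subtype.ext hxy)
    have hq : (Matrix.of fun α β => pderiv ((c β : Fin n)) (f (r α))).det ∈ S :=
      ⟨r, fun l => (c l : Fin n), hrinj, hcval, hc', rfl⟩
    have hz := h _ hq
    rw [RingHom.map_det] at hz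
    exact hdet hz
  · rintro h q ⟨r, c, hrinj, hcinj, hmem, rfl⟩
    set c' : Fin t → ((Bᶜ : Finset (Fin n)) : Type) := fun l => ⟨c l, hmem l⟩ with hc'
    have hc'inj : Function.Injective c' := fun x y hxy => hcinj (congrArg Subtype.val hxy)
    have hz := h r c' hrinj hc'inj
    rw [RingHom.map_det]
    exact hz

end Aux

/-- The non-matroidal locus. Let `V = V(P)` be irreducible of dimension `d` over an algebraically
closed field of characteristic zero, with `P = (f_1,...,f_m)` prime, and suppose the Jacobian over
the function field represents the dual of `M(P)` (hypothesis `hrep`). A point `p ∈ V` lies in the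
non-matroidal locus (the specialized Jacobian fails to represent the dual matroid, i.e. for some
base `B` the columns of the complement drop below rank `n−d`) iff `p` is a zero of the ideal
`⋂_B I_{n−d}(J{E∖B})`, the intersection over bases `B` of the ideals of `(n−d)×(n−d)` minors of
the Jacobian columns outside `B`. In particular the non-matroidal locus is a proper subvariety:
some point of `V` is not in it. -/
theorem nonmatroidal_locus {k : Type*} [Field k] [IsAlgClosed k] [CharZero k] {n m : ℕ}
    (f : Fin m → MvPolynomial (Fin n) k)
    (P : Ideal (MvPolynomial (Fin n) k)) [P.IsPrime]
    (hP : P = Ideal.span (Set.range f))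
    (d : ℕ) (hdn : d ≤ n)
    (hdim : ringKrullDim (MvPolynomial (Fin n) k ⧸ P) = (d : WithBot (WithTop ℕ)))
    (a : Fin n → FractionRing (MvPolynomial (Fin n) k ⧸ P))
    (ha : ∀ i, a i = algebraMap (MvPolynomial (Fin n) k ⧸ P) _ (Ideal.Quotient.mk P (X i)))
    (hrep : ∀ S : Finset (Fin n),
      AlgebraicIndependent k (fun i : S => a i.1) ↔
        (Matrix.of fun (i : Fin m) (j : (Sᶜ : Finset (Fin n))) =>
          algebraMap (MvPolynomial (Fin n) k ⧸ P) (FractionRing (MvPolynomial (Fin n) k ⧸ P))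
            (Ideal.Quotient.mk P (pderiv (j : Fin n) (f i)))).rank = n - d)
    (NM : Ideal (MvPolynomial (Fin n) k))
    (hNM : NM = ⨅ (B : Finset (Fin n)) (_ : AlgebraicIndependent k (fun i : B => a i.1) ∧
        ∀ j ∉ B, ¬ AlgebraicIndependent k (fun i : (insert j B : Finset (Fin n)) => a i.1)),
      Ideal.span {q : MvPolynomial (Fin n) k |
        ∃ (r : Fin (n - d) → Fin m) (c : Fin (n - d) → Fin n),
          Function.Injective r ∧ Function.Injective c ∧ (∀ l, c l ∈ (Bᶜ : Finset (Fin n))) ∧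
          q = (Matrix.of fun α β => pderiv (c β) (f (r α))).det}) :
    (∀ p : Fin n → k, (∀ i, eval p (f i) = 0) →
      ((∀ q ∈ NM, eval p q = 0) ↔
        ∃ B : Finset (Fin n),
          (AlgebraicIndependent k (fun i : B => a i.1) ∧
            ∀ j ∉ B, ¬ AlgebraicIndependent k (fun i : (insert j B : Finset (Fin n)) => a i.1)) ∧
          (Matrix.of fun (i : Fin m) (j : (Bᶜ : Finset (Fin n))) =>
            eval p (pderiv (j : Fin n) (f i))).rank < n - d)) ∧
    (∃ p₀ : Fin n → k, (∀ i, eval p₀ (f i) = 0) ∧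
      ¬ ∃ B : Finset (Fin n),
          (AlgebraicIndependent k (fun i : B => a i.1) ∧
            ∀ j ∉ B, ¬ AlgebraicIndependent k (fun i : (insert j B : Finset (Fin n)) => a i.1)) ∧
          (Matrix.of fun (i : Fin m) (j : (Bᶜ : Finset (Fin n))) =>
            eval p₀ (pderiv (j : Fin n) (f i))).rank < n - d) := by
  classical
  set pred : Finset (Fin n) → Prop := fun B =>
    AlgebraicIndependent k (fun i : B => a i.1) ∧
      ∀ j ∉ B, ¬ AlgebraicIndependent k (fun i : (insert j B : Finset (Fin n)) => a i.1)
    with hpred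
  set I : Finset (Fin n) → Ideal (MvPolynomial (Fin n) k) := fun B =>
    Ideal.span {q : MvPolynomial (Fin n) k |
      ∃ (r : Fin (n - d) → Fin m) (c : Fin (n - d) → Fin n),
        Function.Injective r ∧ Function.Injective c ∧ (∀ l, c l ∈ (Bᶜ : Finset (Fin n))) ∧
        q = (Matrix.of fun α β => pderiv (c β) (f (r α))).det} with hIdef
  have hNM' : NM = (Finset.univ.filter pred).inf I := by
    rw [hNM, Finset.inf_eq_iInf]
    simp only [Finset.mem_filter, Finset.mem_univ, true_and]
    rfl
  constructor
  · intro p _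
    have hker : (RingHom.ker (eval p : MvPolynomial (Fin n) k →+* k)).IsPrime :=
      RingHom.ker_isPrime _
    have step1 : (∀ q ∈ NM, eval p q = 0) ↔ NM ≤ RingHom.ker (eval p) :=
      ⟨fun h q hq => RingHom.mem_ker.mpr (h q hq), fun h q hq => RingHom.mem_ker.mp (h hq)⟩
    rw [step1, hNM', hker.inf_le']
    constructor
    · rintro ⟨B, hBmem, hBle⟩
      rw [Finset.mem_filter] at hBmem
      refine ⟨B, hBmem.2, ?_⟩
      rw [← aux_ideal_vanish_iff f (eval p : MvPolynomial (Fin n) k →+* k) B (n - d)]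
      intro q hq
      exact RingHom.mem_ker.mp (hBle hq)
    · rintro ⟨B, hBpred, hBrank⟩
      refine ⟨B, Finset.mem_filter.mpr ⟨Finset.mem_univ _, hBpred⟩, fun q hq => ?_⟩
      exact RingHom.mem_ker.mpr
        ((aux_ideal_vanish_iff f (eval p : MvPolynomial (Fin n) k →+* k) B (n - d)).mpr
          hBrank q hq)
  · set FF := FractionRing (MvPolynomial (Fin n) k ⧸ P) with hFF
    set φ : MvPolynomial (Fin n) k →+* FF :=
      (algebraMap (MvPolynomial (Fin n) k ⧸ P) FF).comp (Ideal.Quotient.mk P) with hφ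
    have hq : ∀ B : Finset (Fin n), pred B → ∃ q, q ∈ I B ∧ q ∉ P := by
      intro B hB
      have hrk := (hrep B).mp hB.1
      have hnotlt : ¬ ((Matrix.of fun (i : Fin m) (j : (Bᶜ : Finset (Fin n))) =>
          φ (pderiv (j : Fin n) (f i))).rank < n - d) := by
        have heq : (Matrix.of fun (i : Fin m) (j : (Bᶜ : Finset (Fin n))) =>
            φ (pderiv (j : Fin n) (f i))) =
            (Matrix.of fun (i : Fin m) (j : (Bᶜ : Finset (Fin n))) =>
              algebraMap (MvPolynomial (Fin n) k ⧸ P)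
                (FractionRing (MvPolynomial (Fin n) k ⧸ P))
                (Ideal.Quotient.mk P (pderiv (j : Fin n) (f i)))) := rfl
        rw [heq, hrk]
        omega
    -- derive existence of q not vanishing
      have hnot := (aux_ideal_vanish_iff f φ B (n - d)).not.mpr hnotlt
      push_neg at hnot
      obtain ⟨q, hqI, hqne⟩ := hnot
      refine ⟨q, hqI, fun hqP => hqne ?_⟩
      have : Ideal.Quotient.mk P q = 0 := Ideal.Quotient.eq_zero_iff_mem.mpr hqP
      rw [hφ]
      simp [RingHom.comp_apply, this]
    set qf : Finset (Fin n) → MvPolynomial (Fin n) k := fun B =>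
      if h : pred B then (hq B h).choose else 1 with hqf
    have hqf1 : ∀ B, pred B → qf B ∈ I B ∧ qf B ∉ P := by
      intro B hB
      rw [hqf]
      simp only [dif_pos hB]
      exact (hq B hB).choose_spec
    set g : MvPolynomial (Fin n) k := ∏ B ∈ Finset.univ.filter pred, qf B with hg
    have hgP : g ∉ P := by
      intro hmem
      rw [hg] at hmem
      obtain ⟨B, hBmem, hBP⟩ := (Ideal.IsPrime.prod_mem_iff).mp hmem
      exact (hqf1 B (Finset.mem_filter.mp hBmem).2).2 hBP
    have hgV : g ∉ MvPolynomial.vanishingIdeal k (MvPolynomial.zeroLocus k P) := by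
      rw [MvPolynomial.IsPrime.vanishingIdeal_zeroLocus (K := k) P]
      exact hgP
    rw [MvPolynomial.mem_vanishingIdeal_iff] at hgV
    push_neg at hgV
    obtain ⟨p₀, hp₀V, hp₀g⟩ := hgV
    refine ⟨p₀, ?_, ?_⟩
    · intro i
      exact hp₀V (f i) (by rw [hP]; exact Ideal.subset_span ⟨i, rfl⟩)
    · rintro ⟨B, hBpred, hBrank⟩
      have hmemf : B ∈ Finset.univ.filter pred :=
        Finset.mem_filter.mpr ⟨Finset.mem_univ _, hBpred⟩
      have hzero : eval p₀ (qf B) = 0 :=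
        (aux_ideal_vanish_iff f (eval p₀ : MvPolynomial (Fin n) k →+* k) B (n - d)).mpr
          hBrank (qf B) (hqf1 B hBpred).1
      apply hp₀g
      rw [hg, map_prod]
      exact Finset.prod_eq_zero hmemf hzero
end

section
/- The non-matroidal locus of the torus defined by P = ((x²+y²+z²+3)² − 16(x²+y²)) ⊆ ℝ[x,y,z] is the subvariety of the torus where the polynomial xyz·(−x⁴−2x²y²−y⁴−2x²z²−2y²z²−z⁴+2x²+2y²+2z²+15) vanishes; its real points form exactly 8 circles on the torus, given by the ideals (x, y²+z²±4y+3), (y, x²+z²±4x+3), (z, x²+y²−9), (z, x²+y²−1), (z∓1, x²+y²−4). -/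
/-- The non-matroidal locus of the torus `((x²+y²+z²+3)² − 16(x²+y²) = 0)` in `ℝ³` is the
subvariety where `xyz·(−x⁴−2x²y²−y⁴−2x²z²−2y²z²−z⁴+2x²+2y²+2z²+15)` vanishes, and its real
points are exactly the 8 circles cut out by the ideals `(x, y²+z²±4y+3)`, `(y, x²+z²±4x+3)`,
`(z, x²+y²−9)`, `(z, x²+y²−1)`, `(z∓1, x²+y²−4)`. -/
theorem torus_nonmatroidal_locus :
    {p : Fin 3 → ℝ |
        (p 0 ^ 2 + p 1 ^ 2 + p 2 ^ 2 + 3) ^ 2 - 16 * (p 0 ^ 2 + p 1 ^ 2) = 0 ∧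
        p 0 * p 1 * p 2 *
          (-(p 0 ^ 4) - 2 * p 0 ^ 2 * p 1 ^ 2 - p 1 ^ 4 - 2 * p 0 ^ 2 * p 2 ^ 2
            - 2 * p 1 ^ 2 * p 2 ^ 2 - p 2 ^ 4
            + 2 * p 0 ^ 2 + 2 * p 1 ^ 2 + 2 * p 2 ^ 2 + 15) = 0} =
      {p : Fin 3 → ℝ | p 0 = 0 ∧ p 1 ^ 2 + p 2 ^ 2 + 4 * p 1 + 3 = 0} ∪
      {p : Fin 3 → ℝ | p 0 = 0 ∧ p 1 ^ 2 + p 2 ^ 2 - 4 * p 1 + 3 = 0} ∪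
      {p : Fin 3 → ℝ | p 1 = 0 ∧ p 0 ^ 2 + p 2 ^ 2 + 4 * p 0 + 3 = 0} ∪
      {p : Fin 3 → ℝ | p 1 = 0 ∧ p 0 ^ 2 + p 2 ^ 2 - 4 * p 0 + 3 = 0} ∪
      {p : Fin 3 → ℝ | p 2 = 0 ∧ p 0 ^ 2 + p 1 ^ 2 - 9 = 0} ∪
      {p : Fin 3 → ℝ | p 2 = 0 ∧ p 0 ^ 2 + p 1 ^ 2 - 1 = 0} ∪
      {p : Fin 3 → ℝ | p 2 + 1 = 0 ∧ p 0 ^ 2 + p 1 ^ 2 - 4 = 0} ∪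
      {p : Fin 3 → ℝ | p 2 - 1 = 0 ∧ p 0 ^ 2 + p 1 ^ 2 - 4 = 0} := by
  ext p
  simp only [Set.mem_setOf_eq, Set.mem_union]
  set x := p 0 with hx
  set y := p 1 with hy
  set z := p 2 with hz
  constructor
  · rintro ⟨ht, hprod⟩
    rcases mul_eq_zero.1 hprod with h | hQ
    · rcases mul_eq_zero.1 h with h | hz0
      · rcases mul_eq_zero.1 h with hx0 | hy0
        · have h2 : (y ^ 2 + z ^ 2 + 4 * y + 3) * (y ^ 2 + z ^ 2 - 4 * y + 3) = 0 := by
            linear_combination ht + (16 * x - x ^ 3 - 2 * x * (y ^ 2 + z ^ 2 + 3)) * hx0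
          rcases mul_eq_zero.1 h2 with h3 | h3
          · exact Or.inl (Or.inl (Or.inl (Or.inl (Or.inl (Or.inl (Or.inl ⟨hx0, h3⟩))))))
          · exact Or.inl (Or.inl (Or.inl (Or.inl (Or.inl (Or.inl (Or.inr ⟨hx0, h3⟩))))))
        · have h2 : (x ^ 2 + z ^ 2 + 4 * x + 3) * (x ^ 2 + z ^ 2 - 4 * x + 3) = 0 := by
            linear_combination ht + (16 * y - y ^ 3 - 2 * y * (x ^ 2 + z ^ 2 + 3)) * hy0
          rcases mul_eq_zero.1 h2 with h3 | h3
          · exact Or.inl (Or.inl (Or.inl (Or.inl (Or.inl (Or.inr ⟨hy0, h3⟩)))))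
          · exact Or.inl (Or.inl (Or.inl (Or.inl (Or.inr ⟨hy0, h3⟩))))
      · have h2 : (x ^ 2 + y ^ 2 - 9) * (x ^ 2 + y ^ 2 - 1) = 0 := by
          linear_combination ht + (-(z ^ 3) - 2 * z * (x ^ 2 + y ^ 2) - 6 * z) * hz0
        rcases mul_eq_zero.1 h2 with h3 | h3
        · exact Or.inl (Or.inl (Or.inl (Or.inr ⟨hz0, h3⟩)))
        · exact Or.inl (Or.inl (Or.inr ⟨hz0, h3⟩))
    · have h5 : (x ^ 2 + y ^ 2 + z ^ 2 - 5) * (x ^ 2 + y ^ 2 + z ^ 2 + 3) = 0 := by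
        linear_combination -hQ
      have hpos : (0:ℝ) < x ^ 2 + y ^ 2 + z ^ 2 + 3 := by positivity
      have hs : x ^ 2 + y ^ 2 + z ^ 2 = 5 := by
        rcases mul_eq_zero.1 h5 with h | h
        · linarith
        · linarith
      have hr : x ^ 2 + y ^ 2 - 4 = 0 := by
        linear_combination (-1/16) * ht + ((x ^ 2 + y ^ 2 + z ^ 2 + 11) / 16) * hs
      have hz2 : (z + 1) * (z - 1) = 0 := by linear_combination hs - hr
      rcases mul_eq_zero.1 hz2 with h3 | h3
      · exact Or.inl (Or.inr ⟨h3, hr⟩)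
      · exact Or.inr ⟨h3, hr⟩
  · rintro ((((((((⟨h1, h2⟩ | ⟨h1, h2⟩) | ⟨h1, h2⟩) | ⟨h1, h2⟩) | ⟨h1, h2⟩) | ⟨h1, h2⟩) |
      ⟨h1, h2⟩) | ⟨h1, h2⟩))
    · refine ⟨?_, ?_⟩
      · linear_combination (x ^ 3 + 2 * x * (y ^ 2 + z ^ 2 + 3) - 16 * x) * h1 +
          (y ^ 2 + z ^ 2 - 4 * y + 3) * h2
      · linear_combination (y * z * (-(x ^ 4) - 2 * x ^ 2 * y ^ 2 - y ^ 4 - 2 * x ^ 2 * z ^ 2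
          - 2 * y ^ 2 * z ^ 2 - z ^ 4 + 2 * x ^ 2 + 2 * y ^ 2 + 2 * z ^ 2 + 15)) * h1
    · refine ⟨?_, ?_⟩
      · linear_combination (x ^ 3 + 2 * x * (y ^ 2 + z ^ 2 + 3) - 16 * x) * h1 +
          (y ^ 2 + z ^ 2 + 4 * y + 3) * h2
      · linear_combination (y * z * (-(x ^ 4) - 2 * x ^ 2 * y ^ 2 - y ^ 4 - 2 * x ^ 2 * z ^ 2
          - 2 * y ^ 2 * z ^ 2 - z ^ 4 + 2 * x ^ 2 + 2 * y ^ 2 + 2 * z ^ 2 + 15)) * h1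
    · refine ⟨?_, ?_⟩
      · linear_combination (y ^ 3 + 2 * y * (x ^ 2 + z ^ 2 + 3) - 16 * y) * h1 +
          (x ^ 2 + z ^ 2 - 4 * x + 3) * h2
      · linear_combination (x * z * (-(x ^ 4) - 2 * x ^ 2 * y ^ 2 - y ^ 4 - 2 * x ^ 2 * z ^ 2
          - 2 * y ^ 2 * z ^ 2 - z ^ 4 + 2 * x ^ 2 + 2 * y ^ 2 + 2 * z ^ 2 + 15)) * h1
    · refine ⟨?_, ?_⟩
      · linear_combination (y ^ 3 + 2 * y * (x ^ 2 + z ^ 2 + 3) - 16 * y) * h1 +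
          (x ^ 2 + z ^ 2 + 4 * x + 3) * h2
      · linear_combination (x * z * (-(x ^ 4) - 2 * x ^ 2 * y ^ 2 - y ^ 4 - 2 * x ^ 2 * z ^ 2
          - 2 * y ^ 2 * z ^ 2 - z ^ 4 + 2 * x ^ 2 + 2 * y ^ 2 + 2 * z ^ 2 + 15)) * h1
    · refine ⟨?_, ?_⟩
      · linear_combination (z ^ 3 + 2 * z * (x ^ 2 + y ^ 2) + 6 * z) * h1 +
          (x ^ 2 + y ^ 2 - 1) * h2
      · linear_combination (x * y * (-(x ^ 4) - 2 * x ^ 2 * y ^ 2 - y ^ 4 - 2 * x ^ 2 * z ^ 2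
          - 2 * y ^ 2 * z ^ 2 - z ^ 4 + 2 * x ^ 2 + 2 * y ^ 2 + 2 * z ^ 2 + 15)) * h1
    · refine ⟨?_, ?_⟩
      · linear_combination (z ^ 3 + 2 * z * (x ^ 2 + y ^ 2) + 6 * z) * h1 +
          (x ^ 2 + y ^ 2 - 9) * h2
      · linear_combination (x * y * (-(x ^ 4) - 2 * x ^ 2 * y ^ 2 - y ^ 4 - 2 * x ^ 2 * z ^ 2
          - 2 * y ^ 2 * z ^ 2 - z ^ 4 + 2 * x ^ 2 + 2 * y ^ 2 + 2 * z ^ 2 + 15)) * h1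
    · refine ⟨?_, ?_⟩
      · linear_combination (16 * (z + 1) - 32 + (x ^ 2 + y ^ 2 + z ^ 2 - 5) * (z - 1)) * h1 +
          (x ^ 2 + y ^ 2 + z ^ 2 - 5) * h2
      · linear_combination (-(x * y * z) * (x ^ 2 + y ^ 2 + z ^ 2 + 3) * (z - 1)) * h1 +
          (-(x * y * z) * (x ^ 2 + y ^ 2 + z ^ 2 + 3)) * h2
    · refine ⟨?_, ?_⟩
      · linear_combination (16 * (z - 1) + 32 + (x ^ 2 + y ^ 2 + z ^ 2 - 5) * (z + 1)) * h1 +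
          (x ^ 2 + y ^ 2 + z ^ 2 - 5) * h2
      · linear_combination (-(x * y * z) * (x ^ 2 + y ^ 2 + z ^ 2 + 3) * (z + 1)) * h1 +
          (-(x * y * z) * (x ^ 2 + y ^ 2 + z ^ 2 + 3)) * h2
end
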